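/- Let C be a category and let X : [1] × [1] × [1] ⥤ C be a commutative cube in C. Assume that the pullbacks P₀ = X(0,1,0) ×_{X(1,1,0)} X(1,0,0) and P₁ = X(0,1,1) ×_{X(1,1,1)} X(1,0,1) exist in C. Then X is a limit cube — i.e. the cone with apex X(0,0,0), given by the structure maps of X, is a limit cone over the restriction of X to the punctured cube — if and only if the commutative square whose top edge is X((0,0,0) → (0,0,1)), whose bottom edge is the map P₀ → P₁ induced by functoriality of X, and whose vertical edges are the maps X(0,0,0) → P₀ and X(0,0,1) → P₁ induced by the structure maps of the cube, is a pullback square in C. -/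

import Mathlib

open CategoryTheory CategoryTheory.Limits

universe v u

/-- The cube category `[1] × [1] × [1]`, realized as the poset `Fin 2 × Fin 2 × Fin 2`. -/
def Cube : Type := Fin 2 × Fin 2 × Fin 2

instance : Preorder Cube := inferInstanceAs (Preorder (Fin 2 × Fin 2 × Fin 2))

instance : DecidableRel (α := Cube) (· ≤ ·) :=
  inferInstanceAs (DecidableRel (α := Fin 2 × Fin 2 × Fin 2) (· ≤ ·))

instance : SmallCategory Cube := Preorder.smallCategory Cube

instance Cube.homSubsingleton {p q : Cube} : Subsingleton (p ⟶ q) :=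
  ⟨fun f g => by apply ULift.ext; apply Subsingleton.elim⟩

/-- An object of the cube category. -/
def Cube.mk (a b c : Fin 2) : Cube := (a, b, c)

variable {C : Type u} [Category.{v} C]

/-- The structure map of a cube `X : [1]×[1]×[1] ⥤ C` from vertex `(a,b,c)` to
vertex `(a',b',c')`. -/
def cubeEdge (X : Cube ⥤ C) (a b c a' b' c' : Fin 2)
    (h : Cube.mk a b c ≤ Cube.mk a' b' c' := by decide) :
    X.obj (Cube.mk a b c) ⟶ X.obj (Cube.mk a' b' c') :=
  X.map (homOfLE h)


lemma cubeEdge_comp (X : Cube ⥤ C) (a b c a' b' c' a'' b'' c'' : Fin 2)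
    (h : Cube.mk a b c ≤ Cube.mk a' b' c') (h' : Cube.mk a' b' c' ≤ Cube.mk a'' b'' c'') :
    cubeEdge X a b c a' b' c' h ≫ cubeEdge X a' b' c' a'' b'' c'' h' =
      cubeEdge X a b c a'' b'' c'' (h.trans h') := by
  unfold cubeEdge
  rw [← X.map_comp, homOfLE_comp]

/-- The cone with apex `X (0,0,0)` over the restriction of a cube `X : [1]×[1]×[1] ⥤ C` to the
punctured cube (the full subcategory on the seven objects other than `(0,0,0)`), whose legs are
the structure maps of the cube. -/
@[simps]
def cubeCone (X : Cube ⥤ C) :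
    Cone (ObjectProperty.ι (fun p : Cube => p ≠ Cube.mk 0 0 0) ⋙ X) where
  pt := X.obj (Cube.mk 0 0 0)
  π :=
    { app := fun p => X.map (homOfLE (show Cube.mk 0 0 0 ≤ p.obj from
        ⟨Fin.zero_le _, Fin.zero_le _, Fin.zero_le _⟩))
      naturality := fun p q f => by
        dsimp
        rw [Category.id_comp, ← X.map_comp]
        exact congrArg X.map (Subsingleton.elim _ _) }

/-! ### Auxiliary material -/

instance : DecidableEq Cube := inferInstanceAs (DecidableEq (Fin 2 × Fin 2 × Fin 2))

namespace CubeAux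

variable {X : Cube ⥤ C}

lemma map_comp' (X : Cube ⥤ C) {p q r : Cube} (h1 : p ≤ q) (h2 : q ≤ r) :
    X.map (homOfLE h1) ≫ X.map (homOfLE h2) = X.map (homOfLE (h1.trans h2)) := by
  rw [← X.map_comp]
  exact congrArg X.map (Subsingleton.elim _ _)

lemma le_one_of_ne {p : Cube} (hp : p ≠ Cube.mk 0 0 0) (h1 : ¬ Cube.mk 0 1 0 ≤ p)
    (h2 : ¬ Cube.mk 1 0 0 ≤ p) : Cube.mk 0 0 1 ≤ p := by
  obtain ⟨a, b, c⟩ := p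
  change Cube.mk a b c ≠ _ at hp; change ¬ _ ≤ Cube.mk a b c at h1 h2; change _ ≤ Cube.mk a b c
  fin_cases a <;> fin_cases b <;> fin_cases c <;> revert hp h1 h2 <;> decide

section Legs

variable {W : C} {f1 : W ⟶ X.obj (Cube.mk 0 1 0)} {f2 : W ⟶ X.obj (Cube.mk 1 0 0)}
  {f3 : W ⟶ X.obj (Cube.mk 0 0 1)}

/-- The legs of the cone over the punctured cube determined by three maps to the
three vertices adjacent to `(0,0,0)`. -/
def legs (X : Cube ⥤ C) {W : C} (f1 : W ⟶ X.obj (Cube.mk 0 1 0))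
    (f2 : W ⟶ X.obj (Cube.mk 1 0 0)) (f3 : W ⟶ X.obj (Cube.mk 0 0 1))
    (p : Cube) (hp : p ≠ Cube.mk 0 0 0) : W ⟶ X.obj p :=
  if h : Cube.mk 0 1 0 ≤ p then f1 ≫ X.map (homOfLE h)
  else if h' : Cube.mk 1 0 0 ≤ p then f2 ≫ X.map (homOfLE h')
  else f3 ≫ X.map (homOfLE (le_one_of_ne hp h h'))

variable (h12 : f1 ≫ cubeEdge X 0 1 0 1 1 0 = f2 ≫ cubeEdge X 1 0 0 1 1 0)
  (h13 : f1 ≫ cubeEdge X 0 1 0 0 1 1 = f3 ≫ cubeEdge X 0 0 1 0 1 1)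
  (h23 : f2 ≫ cubeEdge X 1 0 0 1 0 1 = f3 ≫ cubeEdge X 0 0 1 1 0 1)

include h12 in
lemma cross12 {q : Cube} (hq1 : Cube.mk 0 1 0 ≤ q) (hq2 : Cube.mk 1 0 0 ≤ q) :
    f1 ≫ X.map (homOfLE hq1) = f2 ≫ X.map (homOfLE hq2) := by
  have hq : Cube.mk 1 1 0 ≤ q := ⟨hq2.1, hq1.2.1, hq1.2.2⟩
  rw [show homOfLE hq1 = homOfLE (show Cube.mk 0 1 0 ≤ Cube.mk 1 1 0 by decide) ≫ homOfLE hq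
        from Subsingleton.elim _ _,
      show homOfLE hq2 = homOfLE (show Cube.mk 1 0 0 ≤ Cube.mk 1 1 0 by decide) ≫ homOfLE hq
        from Subsingleton.elim _ _,
      X.map_comp, X.map_comp, ← Category.assoc, ← Category.assoc]
  exact congrArg (· ≫ X.map (homOfLE hq)) h12

include h13 in
lemma cross13 {q : Cube} (hq1 : Cube.mk 0 1 0 ≤ q) (hq3 : Cube.mk 0 0 1 ≤ q) :
    f1 ≫ X.map (homOfLE hq1) = f3 ≫ X.map (homOfLE hq3) := by
  have hq : Cube.mk 0 1 1 ≤ q := ⟨hq1.1, hq1.2.1, hq3.2.2⟩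
  rw [show homOfLE hq1 = homOfLE (show Cube.mk 0 1 0 ≤ Cube.mk 0 1 1 by decide) ≫ homOfLE hq
        from Subsingleton.elim _ _,
      show homOfLE hq3 = homOfLE (show Cube.mk 0 0 1 ≤ Cube.mk 0 1 1 by decide) ≫ homOfLE hq
        from Subsingleton.elim _ _,
      X.map_comp, X.map_comp, ← Category.assoc, ← Category.assoc]
  exact congrArg (· ≫ X.map (homOfLE hq)) h13

include h23 in
lemma cross23 {q : Cube} (hq2 : Cube.mk 1 0 0 ≤ q) (hq3 : Cube.mk 0 0 1 ≤ q) :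
    f2 ≫ X.map (homOfLE hq2) = f3 ≫ X.map (homOfLE hq3) := by
  have hq : Cube.mk 1 0 1 ≤ q := ⟨hq2.1, hq2.2.1, hq3.2.2⟩
  rw [show homOfLE hq2 = homOfLE (show Cube.mk 1 0 0 ≤ Cube.mk 1 0 1 by decide) ≫ homOfLE hq
        from Subsingleton.elim _ _,
      show homOfLE hq3 = homOfLE (show Cube.mk 0 0 1 ≤ Cube.mk 1 0 1 by decide) ≫ homOfLE hq
        from Subsingleton.elim _ _,
      X.map_comp, X.map_comp, ← Category.assoc, ← Category.assoc]
  exact congrArg (· ≫ X.map (homOfLE hq)) h23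

include h12 h13 h23 in
lemma legs_w {p q : Cube} (hp : p ≠ Cube.mk 0 0 0) (hq : q ≠ Cube.mk 0 0 0) (hpq : p ≤ q) :
    legs X f1 f2 f3 p hp ≫ X.map (homOfLE hpq) = legs X f1 f2 f3 q hq := by
  unfold legs
  by_cases hp1 : Cube.mk 0 1 0 ≤ p
  · have hq1 : Cube.mk 0 1 0 ≤ q := hp1.trans hpq
    rw [dif_pos hp1, dif_pos hq1, Category.assoc, map_comp']
  · rw [dif_neg hp1]
    by_cases hp2 : Cube.mk 1 0 0 ≤ p
    · have hq2 : Cube.mk 1 0 0 ≤ q := hp2.trans hpq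
      rw [dif_pos hp2]
      by_cases hq1 : Cube.mk 0 1 0 ≤ q
      · rw [dif_pos hq1, Category.assoc, map_comp']
        exact (cross12 h12 hq1 hq2).symm
      · rw [dif_neg hq1, dif_pos hq2, Category.assoc, map_comp']
    · rw [dif_neg hp2]
      have hp3 : Cube.mk 0 0 1 ≤ p := le_one_of_ne hp hp1 hp2
      have hq3 : Cube.mk 0 0 1 ≤ q := hp3.trans hpq
      by_cases hq1 : Cube.mk 0 1 0 ≤ q
      · rw [dif_pos hq1, Category.assoc, map_comp']
        exact (cross13 h13 hq1 hq3).symm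
      · rw [dif_neg hq1]
        by_cases hq2 : Cube.mk 1 0 0 ≤ q
        · rw [dif_pos hq2, Category.assoc, map_comp']
          exact (cross23 h23 hq2 hq3).symm
        · rw [dif_neg hq2, Category.assoc, map_comp']

/-- The cone over the punctured cube determined by three compatible maps. -/
def mkCone (X : Cube ⥤ C) {W : C} (f1 : W ⟶ X.obj (Cube.mk 0 1 0))
    (f2 : W ⟶ X.obj (Cube.mk 1 0 0)) (f3 : W ⟶ X.obj (Cube.mk 0 0 1))
    (h12 : f1 ≫ cubeEdge X 0 1 0 1 1 0 = f2 ≫ cubeEdge X 1 0 0 1 1 0)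
    (h13 : f1 ≫ cubeEdge X 0 1 0 0 1 1 = f3 ≫ cubeEdge X 0 0 1 0 1 1)
    (h23 : f2 ≫ cubeEdge X 1 0 0 1 0 1 = f3 ≫ cubeEdge X 0 0 1 1 0 1) :
    Cone (ObjectProperty.ι (fun p : Cube => p ≠ Cube.mk 0 0 0) ⋙ X) where
  pt := W
  π :=
    { app := fun p => legs X f1 f2 f3 p.obj p.property
      naturality := fun p q f => by
        dsimp
        rw [Category.id_comp]
        exact (legs_w h12 h13 h23 p.property q.property (leOfHom f.hom)).symm }

lemma map_id' (X : Cube ⥤ C) {p : Cube} (h : p ≤ p) : X.map (homOfLE h) = 𝟙 _ := by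
  rw [show homOfLE h = 𝟙 p from Subsingleton.elim _ _, X.map_id]

lemma mkCone_π_app (X : Cube ⥤ C) {W : C} (f1 : W ⟶ X.obj (Cube.mk 0 1 0))
    (f2 : W ⟶ X.obj (Cube.mk 1 0 0)) (f3 : W ⟶ X.obj (Cube.mk 0 0 1))
    (h12 : f1 ≫ cubeEdge X 0 1 0 1 1 0 = f2 ≫ cubeEdge X 1 0 0 1 1 0)
    (h13 : f1 ≫ cubeEdge X 0 1 0 0 1 1 = f3 ≫ cubeEdge X 0 0 1 0 1 1)
    (h23 : f2 ≫ cubeEdge X 1 0 0 1 0 1 = f3 ≫ cubeEdge X 0 0 1 1 0 1)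
    (p : ObjectProperty.FullSubcategory (fun p : Cube => p ≠ Cube.mk 0 0 0)) :
    (mkCone X f1 f2 f3 h12 h13 h23).π.app p = legs X f1 f2 f3 p.obj p.property := rfl

lemma legs_app1 : legs X f1 f2 f3 (Cube.mk 0 1 0) (by decide) = f1 := by
  unfold legs
  rw [dif_pos (le_refl _), map_id', Category.comp_id]

lemma legs_app2 : legs X f1 f2 f3 (Cube.mk 1 0 0) (by decide) = f2 := by
  unfold legs
  rw [dif_neg (by decide), dif_pos (le_refl _), map_id', Category.comp_id]

lemma legs_app3 : legs X f1 f2 f3 (Cube.mk 0 0 1) (by decide) = f3 := by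
  unfold legs
  rw [dif_neg (by decide), dif_neg (by decide), map_id', Category.comp_id]

end Legs

lemma gen_cover {p : Cube} (hp : p ≠ Cube.mk 0 0 0) :
    Cube.mk 0 1 0 ≤ p ∨ Cube.mk 1 0 0 ≤ p ∨ Cube.mk 0 0 1 ≤ p := by
  obtain ⟨a, b, c⟩ := p
  change Cube.mk a b c ≠ _ at hp; change _ ≤ Cube.mk a b c ∨ _ ≤ Cube.mk a b c ∨ _ ≤ Cube.mk a b c
  fin_cases a <;> fin_cases b <;> fin_cases c <;> revert hp <;> decide

lemma cone_w (X : Cube ⥤ C)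
    (s : Cone (ObjectProperty.ι (fun p : Cube => p ≠ Cube.mk 0 0 0) ⋙ X))
    (p q : Cube) (hp : p ≠ Cube.mk 0 0 0) (hq : q ≠ Cube.mk 0 0 0) (hpq : p ≤ q) :
    s.π.app ⟨p, hp⟩ ≫ X.map (homOfLE hpq) = s.π.app ⟨q, hq⟩ :=
  s.w (show (⟨p, hp⟩ : ObjectProperty.FullSubcategory _) ⟶ ⟨q, hq⟩ from ObjectProperty.homMk (homOfLE hpq))

end CubeAux

open CubeAux

set_option maxHeartbeats 2000000 in
/-- A commutative cube `X : [1]×[1]×[1] ⥤ C` is a limit cube — i.e. the cone with apex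
`X (0,0,0)` given by the structure maps of `X` is a limit cone over the restriction of `X` to
the punctured cube — if and only if the square
```
X (0,0,0) ------------> X (0,0,1)
   |                        |
   ↓                        ↓
  P₀ --------------------> P₁
```
is a pullback square, where `P₀ = X (0,1,0) ×_{X (1,1,0)} X (1,0,0)` and
`P₁ = X (0,1,1) ×_{X (1,1,1)} X (1,0,1)`, the vertical maps are induced by the structure maps
of the cube, and the bottom map is induced by functoriality of `X`. -/
theorem cube_isLimit_iff_isPullback (X : Cube ⥤ C)
    [HasPullback (cubeEdge X 0 1 0 1 1 0) (cubeEdge X 1 0 0 1 1 0)]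
    [HasPullback (cubeEdge X 0 1 1 1 1 1) (cubeEdge X 1 0 1 1 1 1)] :
    Nonempty (IsLimit (cubeCone X)) ↔
      IsPullback
        -- the left edge `X (0,0,0) ⟶ P₀` induced by the structure maps of the cube
        (pullback.lift (cubeEdge X 0 0 0 0 1 0) (cubeEdge X 0 0 0 1 0 0)
          (by rw [cubeEdge_comp, cubeEdge_comp] <;> decide))
        -- the top edge `X (0,0,0) ⟶ X (0,0,1)`
        (cubeEdge X 0 0 0 0 0 1)
        -- the bottom edge `P₀ ⟶ P₁` induced by functoriality of `X`
        (pullback.map _ _ _ _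
          (cubeEdge X 0 1 0 0 1 1) (cubeEdge X 1 0 0 1 0 1) (cubeEdge X 1 1 0 1 1 1)
          (by rw [cubeEdge_comp, cubeEdge_comp] <;> decide)
          (by rw [cubeEdge_comp, cubeEdge_comp] <;> decide))
        -- the right edge `X (0,0,1) ⟶ P₁` induced by the structure maps of the cube
        (pullback.lift (cubeEdge X 0 0 1 0 1 1) (cubeEdge X 0 0 1 1 0 1)
          (by rw [cubeEdge_comp, cubeEdge_comp] <;> decide)) := by
  constructor
  · rintro ⟨hL⟩
    refine IsPullback.of_isLimit'
      ⟨by apply pullback.hom_ext <;>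
          simp only [Category.assoc, pullback.lift_fst, pullback.lift_snd,
            pullback.lift_fst_assoc, pullback.lift_snd_assoc, cubeEdge_comp]⟩ ?_
    refine PullbackCone.IsLimit.mk _
      (fun s => hL.lift (mkCone X (s.fst ≫ pullback.fst _ _) (s.fst ≫ pullback.snd _ _) s.snd
        (by simp only [Category.assoc, pullback.condition])
        (by simpa only [Category.assoc, pullback.lift_fst, pullback.lift_fst_assoc]
              using s.condition =≫ pullback.fst _ _)
        (by simpa only [Category.assoc, pullback.lift_snd, pullback.lift_snd_assoc]
              using s.condition =≫ pullback.snd _ _)))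
      ?_ ?_ ?_
    · intro s
      apply pullback.hom_ext
      · refine (Category.assoc _ _ _).trans ((_ ≫= pullback.lift_fst _ _ _).trans ?_)
        exact (hL.fac _ ⟨Cube.mk 0 1 0, by decide⟩).trans ((mkCone_π_app X _ _ _ _ _ _ _).trans legs_app1)
      · refine (Category.assoc _ _ _).trans ((_ ≫= pullback.lift_snd _ _ _).trans ?_)
        exact (hL.fac _ ⟨Cube.mk 1 0 0, by decide⟩).trans ((mkCone_π_app X _ _ _ _ _ _ _).trans legs_app2)
    · intro s
      exact (hL.fac _ ⟨Cube.mk 0 0 1, by decide⟩).trans ((mkCone_π_app X _ _ _ _ _ _ _).trans legs_app3)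
    · intro s m h1 h2
      have hm1 := h1 =≫ pullback.fst _ _
      rw [Category.assoc, pullback.lift_fst] at hm1
      have hm2 := h1 =≫ pullback.snd _ _
      rw [Category.assoc, pullback.lift_snd] at hm2
      apply hL.hom_ext
      intro p
      erw [hL.fac]
      show m ≫ (cubeCone X).π.app p = legs X _ _ _ p.obj p.property
      unfold legs
      by_cases hq1 : Cube.mk 0 1 0 ≤ p.obj
      · rw [dif_pos hq1,
          show (cubeCone X).π.app p = cubeEdge X 0 0 0 0 1 0 (by decide) ≫ X.map (homOfLE hq1)
            from (map_comp' X (by decide) hq1).symm, ← Category.assoc, hm1, Category.assoc]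
      · rw [dif_neg hq1]
        by_cases hq2 : Cube.mk 1 0 0 ≤ p.obj
        · rw [dif_pos hq2,
            show (cubeCone X).π.app p = cubeEdge X 0 0 0 1 0 0 (by decide) ≫ X.map (homOfLE hq2)
              from (map_comp' X (by decide) hq2).symm, ← Category.assoc, hm2, Category.assoc]
        · rw [dif_neg hq2,
            show (cubeCone X).π.app p =
                cubeEdge X 0 0 0 0 0 1 (by decide) ≫ X.map (homOfLE (le_one_of_ne p.property hq1 hq2))
              from (map_comp' X (by decide) _).symm, ← Category.assoc, h2]
  · intro hP
    refine ⟨IsLimit.ofExistsUnique fun s => ?_⟩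
    have w1 : s.π.app ⟨Cube.mk 0 1 0, by decide⟩ ≫ cubeEdge X 0 1 0 1 1 0 =
        s.π.app ⟨Cube.mk 1 0 0, by decide⟩ ≫ cubeEdge X 1 0 0 1 1 0 :=
      (cone_w X s (Cube.mk 0 1 0) (Cube.mk 1 1 0) (by decide) (by decide) (by decide)).trans
        (cone_w X s (Cube.mk 1 0 0) (Cube.mk 1 1 0) (by decide) (by decide) (by decide)).symm
    have w2 : pullback.lift _ _ w1 ≫ pullback.map _ _ _ _
          (cubeEdge X 0 1 0 0 1 1) (cubeEdge X 1 0 0 1 0 1) (cubeEdge X 1 1 0 1 1 1)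
          (by rw [cubeEdge_comp, cubeEdge_comp] <;> decide) (by rw [cubeEdge_comp, cubeEdge_comp] <;> decide) =
        s.π.app ⟨Cube.mk 0 0 1, by decide⟩ ≫ pullback.lift (cubeEdge X 0 0 1 0 1 1)
          (cubeEdge X 0 0 1 1 0 1) (by rw [cubeEdge_comp, cubeEdge_comp] <;> decide) := by
      apply pullback.hom_ext
      · simp only [Category.assoc, pullback.lift_fst, pullback.lift_fst_assoc]
        exact (cone_w X s (Cube.mk 0 1 0) (Cube.mk 0 1 1) (by decide) (by decide)
            (by decide)).trans
          (cone_w X s (Cube.mk 0 0 1) (Cube.mk 0 1 1) (by decide) (by decide) (by decide)).symm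
      · simp only [Category.assoc, pullback.lift_snd, pullback.lift_snd_assoc]
        exact (cone_w X s (Cube.mk 1 0 0) (Cube.mk 1 0 1) (by decide) (by decide)
            (by decide)).trans
          (cone_w X s (Cube.mk 0 0 1) (Cube.mk 1 0 1) (by decide) (by decide) (by decide)).symm
    have e0 := hP.lift_fst (pullback.lift _ _ w1) (s.π.app ⟨Cube.mk 0 0 1, by decide⟩) w2
    have e1 := e0 =≫ pullback.fst _ _
    simp only [Category.assoc, pullback.lift_fst] at e1
    have e2 := e0 =≫ pullback.snd _ _
    simp only [Category.assoc, pullback.lift_snd] at e2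
    have e3 := hP.lift_snd (pullback.lift _ _ w1) (s.π.app ⟨Cube.mk 0 0 1, by decide⟩) w2
    refine ⟨hP.lift (pullback.lift _ _ w1) (s.π.app ⟨Cube.mk 0 0 1, by decide⟩) w2, ?_, ?_⟩
    · intro p
      rcases gen_cover p.property with h | h | h
      · erw [show (cubeCone X).π.app p = cubeEdge X 0 0 0 0 1 0 (by decide) ≫ X.map (homOfLE h)
            from (map_comp' X (by decide) h).symm, ← Category.assoc, e1]
        exact cone_w X s _ _ (by decide) p.property h
      · erw [show (cubeCone X).π.app p = cubeEdge X 0 0 0 1 0 0 (by decide) ≫ X.map (homOfLE h)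
            from (map_comp' X (by decide) h).symm, ← Category.assoc, e2]
        exact cone_w X s _ _ (by decide) p.property h
      · erw [show (cubeCone X).π.app p = cubeEdge X 0 0 0 0 0 1 (by decide) ≫ X.map (homOfLE h)
            from (map_comp' X (by decide) h).symm, ← Category.assoc, e3]
        exact cone_w X s _ _ (by decide) p.property h
    · intro m hm
      apply hP.hom_ext
      · rw [hP.lift_fst]
        apply pullback.hom_ext
        · erw [Category.assoc, pullback.lift_fst, pullback.lift_fst]
          exact hm ⟨Cube.mk 0 1 0, by decide⟩
        · erw [Category.assoc, pullback.lift_snd, pullback.lift_snd]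
          exact hm ⟨Cube.mk 1 0 0, by decide⟩
      · rw [hP.lift_snd]
        exact hm ⟨Cube.mk 0 0 1, by decide⟩
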